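/- Let M be a length-factorial cancellative commutative monoid that is reduced (its only unit is the identity), and let x be a non-unit of M admitting at least two factorizations into atoms. Let z1 and z2 be factorizations of x of the smallest and second-smallest possible lengths, respectively. Then every atom of M dividing x appears in z1 or in z2. -/
import Mathlib


/-- `z` is a factorization of `x`: a multiset of atoms (irreducible elements)
whose product equals `x` (the monoid is reduced, so no associates are needed). -/
def IsFactorizationOf {M : Type*} [CancelCommMonoid M] (z : Multiset M) (x : M) : Prop :=
  (∀ a ∈ z, Irreducible a) ∧ z.prod = x

/-- Let `M` be a reduced length-factorial cancellative commutative monoid and let `x` be a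
non-unit of `M` admitting at least two factorizations into atoms.  If `z₁` is a
factorization of `x` of smallest length and `z₂` is a factorization of `x` of
second-smallest length, then every atom of `M` dividing `x` appears in `z₁` or in `z₂`. -/
theorem atom_divisor_mem_min_factorizations {M : Type*} [CancelCommMonoid M]
    (hred : ∀ u : M, IsUnit u → u = 1)
    (hatomic : ∀ y : M, ¬IsUnit y → ∃ z : Multiset M, IsFactorizationOf z y)
    (hlf : ∀ (y : M) (w₁ w₂ : Multiset M), IsFactorizationOf w₁ y → IsFactorizationOf w₂ y →
      Multiset.card w₁ = Multiset.card w₂ → w₁ = w₂)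
    (x : M) (hx : ¬IsUnit x)
    (z₁ z₂ : Multiset M)
    (hz₁ : IsFactorizationOf z₁ x) (hz₂ : IsFactorizationOf z₂ x)
    -- `z₁` has the smallest possible length among factorizations of `x`:
    (hmin₁ : ∀ z : Multiset M, IsFactorizationOf z x → Multiset.card z₁ ≤ Multiset.card z)
    -- `z₂` has a different length from `z₁` (in particular `x` has at least two
    -- factorizations), and its length is the second-smallest possible one:
    (hne : Multiset.card z₂ ≠ Multiset.card z₁)
    (hmin₂ : ∀ z : Multiset M, IsFactorizationOf z x → Multiset.card z ≠ Multiset.card z₁ →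
      Multiset.card z₂ ≤ Multiset.card z) :
    ∀ a : M, Irreducible a → a ∣ x → a ∈ z₁ ∨ a ∈ z₂ := by
  intro a ha hdvd
  by_contra hcon
  push_neg at hcon
  obtain ⟨ha1, ha2⟩ := hcon
  obtain ⟨y, hy⟩ := hdvd
  obtain ⟨w, hw1, hw2⟩ : ∃ w : Multiset M, (∀ b ∈ w, Irreducible b) ∧ w.prod = y := by
    by_cases hyu : IsUnit y
    · exact ⟨0, by simp, by simp [hred y hyu]⟩
    · obtain ⟨w, hw⟩ := hatomic y hyu; exact ⟨w, hw.1, hw.2⟩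
  have hz : IsFactorizationOf (a ::ₘ w) x := by
    constructor
    · intro b hb
      rcases Multiset.mem_cons.mp hb with rfl | hb
      · exact ha
      · exact hw1 b hb
    · simp [hw2, hy]
  set z : Multiset M := a ::ₘ w with hzdef
  set n := Multiset.card z with hn
  set l₁ := Multiset.card z₁ with hl1
  set l₂ := Multiset.card z₂ with hl2
  have haz : a ∈ z := Multiset.mem_cons_self a w
  have hn1 : n ≠ l₁ := fun h => ha1 ((hlf x z z₁ hz hz₁ h) ▸ haz)
  have hn2 : n ≠ l₂ := fun h => ha2 ((hlf x z z₂ hz hz₂ h) ▸ haz)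
  have h12 : l₁ < l₂ := lt_of_le_of_ne (hmin₁ z₂ hz₂) (Ne.symm hne)
  have h2n : l₂ < n := lt_of_le_of_ne (hmin₂ z hz hn1) hn2.symm
  have hA : IsFactorizationOf ((l₂ - l₁) • z + (n - l₂) • z₁) (x ^ (n - l₁)) := by
    constructor
    · intro b hb
      rcases Multiset.mem_add.mp hb with hb | hb
      · exact hz.1 b (Multiset.mem_of_mem_nsmul hb)
      · exact hz₁.1 b (Multiset.mem_of_mem_nsmul hb)
    · rw [Multiset.prod_add, Multiset.prod_nsmul, Multiset.prod_nsmul, hz.2, hz₁.2,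
        ← pow_add]
      congr 1
      omega
  have hB : IsFactorizationOf ((n - l₁) • z₂) (x ^ (n - l₁)) := by
    refine ⟨fun b hb => hz₂.1 b (Multiset.mem_of_mem_nsmul hb), ?_⟩
    rw [Multiset.prod_nsmul, hz₂.2]
  have hcard : Multiset.card ((l₂ - l₁) • z + (n - l₂) • z₁)
      = Multiset.card ((n - l₁) • z₂) := by
    simp only [Multiset.card_add, Multiset.card_nsmul, ← hn, ← hl1, ← hl2]
    have h1 : l₁ ≤ l₂ := h12.le
    have h2 : l₂ ≤ n := h2n.le
    have h3 : l₁ ≤ n := h1.trans h2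
    zify [h1, h2, h3]
    ring
  have heq := hlf (x ^ (n - l₁)) _ _ hA hB hcard
  have : a ∈ (n - l₁) • z₂ := by
    rw [← heq]
    exact Multiset.mem_add.mpr (Or.inl ((Multiset.mem_nsmul_of_ne_zero (by omega)).mpr haz))
  exact ha2 (Multiset.mem_of_mem_nsmul this)
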